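/- Let φ: ℝⁿ → ℝ≥0 be a semi-norm, k a positive integer, t ∈ ℤ₊ and w ≥ 0, and OPT(t,w) = max{φ(x) : ‖x‖₂ ≤ w, ‖x‖₀ ≤ t}. Then OPT(t,w) ≤ w·√⌈t/k⌉ · OPT(k,1). -/

import Mathlib

/-- The optimal value of the semi-norm SPCA problem with right-hand sides `t` (sparsity)
and `w` (Euclidean norm bound). -/
noncomputable def OPT (n : ℕ) (φ : EuclideanSpace ℝ (Fin n) → ℝ) (t : ℕ) (w : ℝ) : ℝ :=
  sSup (φ '' {x | ‖x‖ ≤ w ∧ (Finset.univ.filter (fun i => x i ≠ 0)).card ≤ t})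

theorem stmt_9 (n : ℕ) (φ : EuclideanSpace ℝ (Fin n) → ℝ)
    (hhom : ∀ l : ℝ, 0 ≤ l → ∀ x, φ (l • x) = l * φ x)
    (hsub : ∀ u v, φ (u + v) ≤ φ u + φ v)
    (hnonneg : ∀ x, 0 ≤ φ x)
    (hzero : φ 0 = 0)
    (k t : ℕ) (hk : 1 ≤ k) (w : ℝ) (hw : 0 ≤ w) :
    OPT n φ t w ≤ w * Real.sqrt ((⌈(t : ℝ) / (k : ℝ)⌉ : ℤ) : ℝ) * OPT n φ k 1 := by
  classical
  -- coordinate bound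
  have hcoord : ∀ x : EuclideanSpace ℝ (Fin n), ∀ i, |x i| ≤ ‖x‖ := by
    intro x i
    rw [EuclideanSpace.norm_eq, ← Real.sqrt_sq (abs_nonneg (x i))]
    apply Real.sqrt_le_sqrt
    have := Finset.single_le_sum (f := fun j => ‖x j‖ ^ 2)
      (fun j _ => by positivity) (Finset.mem_univ i)
    simpa [Real.norm_eq_abs, sq_abs] using this
  -- squared norm as sum
  have hsq : ∀ v : EuclideanSpace ℝ (Fin n), ‖v‖ ^ 2 = ∑ i, (v i) ^ 2 := by
    intro v
    rw [EuclideanSpace.norm_eq, Real.sq_sqrt (by positivity)]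
    simp [Real.norm_eq_abs, sq_abs]
  -- global bound on unit ball
  set C : ℝ := ∑ i : Fin n,
      (φ (EuclideanSpace.single i 1) + φ (EuclideanSpace.single i (-1))) with hCdef
  have hφbound : ∀ x : EuclideanSpace ℝ (Fin n), ‖x‖ ≤ 1 → φ x ≤ C := by
    intro x hx
    have hdecomp : x = ∑ i : Fin n, EuclideanSpace.single i (x i) := by
      ext j
      have h : (∑ i : Fin n, EuclideanSpace.single i (x i)) j
          = ∑ i : Fin n, (EuclideanSpace.single i (x i)) j :=
        by rw [WithLp.ofLp_sum]; exact Finset.sum_apply j Finset.univ _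
      rw [h]
      simp [EuclideanSpace.single_apply]
    calc φ x = φ (∑ i : Fin n, EuclideanSpace.single i (x i)) := by rw [← hdecomp]
      _ ≤ ∑ i : Fin n, φ (EuclideanSpace.single i (x i)) :=
          Finset.le_sum_of_subadditive φ hzero.le hsub _ _
      _ ≤ C := by
          rw [hCdef]
          apply Finset.sum_le_sum
          intro i _
          have hxi : |x i| ≤ 1 := le_trans (hcoord x i) hx
          rcases le_or_gt 0 (x i) with h | h
          · have heq : EuclideanSpace.single i (x i) = (x i) • EuclideanSpace.single i (1 : ℝ) := by
              ext j
              simp [EuclideanSpace.single_apply, mul_ite]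
            rw [heq, hhom _ h]
            have h1 := hnonneg (EuclideanSpace.single i (1 : ℝ))
            have h2 := hnonneg (EuclideanSpace.single i (-1 : ℝ))
            have : x i ≤ 1 := le_trans (le_abs_self _) hxi
            nlinarith
          · have heq : EuclideanSpace.single i (x i) = (-(x i)) • EuclideanSpace.single i (-1 : ℝ) := by
              ext j
              simp [EuclideanSpace.single_apply, mul_ite]
              split_ifs <;> simp
            rw [heq, hhom _ (by linarith)]
            have h1 := hnonneg (EuclideanSpace.single i (1 : ℝ))
            have h2 := hnonneg (EuclideanSpace.single i (-1 : ℝ))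
            have : -(x i) ≤ 1 := le_trans (neg_le_abs _) hxi
            nlinarith
  have hbdd : BddAbove (φ '' {x : EuclideanSpace ℝ (Fin n) |
      ‖x‖ ≤ 1 ∧ (Finset.univ.filter (fun i => x i ≠ 0)).card ≤ k}) := by
    refine ⟨C, ?_⟩
    rintro b ⟨x, ⟨hx1, _⟩, rfl⟩
    exact hφbound x hx1
  have hOPTnonneg : 0 ≤ OPT n φ k 1 :=
    Real.sSup_nonneg (by rintro b ⟨x, _, rfl⟩; exact hnonneg x)
  -- key: k-sparse vectors
  have hkey : ∀ y : EuclideanSpace ℝ (Fin n),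
      (Finset.univ.filter (fun i => y i ≠ 0)).card ≤ k → φ y ≤ ‖y‖ * OPT n φ k 1 := by
    intro y hy
    rcases eq_or_ne y 0 with rfl | hy0
    · simp [hzero]
    · have hny : 0 < ‖y‖ := norm_pos_iff.mpr hy0
      set z : EuclideanSpace ℝ (Fin n) := ‖y‖⁻¹ • y with hzdef
      have hz1 : ‖z‖ = 1 := by
        rw [hzdef, norm_smul, Real.norm_eq_abs, abs_of_nonneg (inv_nonneg.mpr hny.le),
          inv_mul_cancel₀ hny.ne']
      have hzsupp : (Finset.univ.filter (fun i => z i ≠ 0)).card ≤ k := by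
        refine le_trans (Finset.card_le_card ?_) hy
        intro i hi
        simp only [Finset.mem_filter, Finset.mem_univ, true_and] at hi ⊢
        intro h0
        apply hi
        rw [hzdef]
        simp [h0]
      have hmem : φ z ∈ φ '' {x : EuclideanSpace ℝ (Fin n) |
          ‖x‖ ≤ 1 ∧ (Finset.univ.filter (fun i => x i ≠ 0)).card ≤ k} :=
        ⟨z, ⟨hz1.le, hzsupp⟩, rfl⟩
      have hle : φ z ≤ OPT n φ k 1 := le_csSup hbdd hmem
      have hyz : y = ‖y‖ • z := by
        rw [hzdef, smul_smul, mul_inv_cancel₀ hny.ne', one_smul]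
      have : φ y = ‖y‖ * φ z := by
        conv_lhs => rw [hyz]
        rw [hhom _ (norm_nonneg y)]
      rw [this]
      exact mul_le_mul_of_nonneg_left hle (norm_nonneg y)
  -- main induction
  have main : ∀ m : ℕ, ∀ x : EuclideanSpace ℝ (Fin n),
      (Finset.univ.filter (fun i => x i ≠ 0)).card ≤ m * k →
      φ x ≤ Real.sqrt m * ‖x‖ * OPT n φ k 1 := by
    intro m
    induction m with
    | zero =>
      intro x hx
      have hx0 : x = 0 := by
        ext i
        by_contra h0
        have hmem : i ∈ Finset.univ.filter (fun i => x i ≠ 0) := by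
          simp only [Finset.mem_filter, Finset.mem_univ, true_and]
          exact h0
        have : (Finset.univ.filter (fun i => x i ≠ 0)).card = 0 := by omega
        rw [Finset.card_eq_zero] at this
        simp [this] at hmem
      simp [hx0, hzero]
    | succ m ih =>
      intro x hx
      set T := Finset.univ.filter (fun i => x i ≠ 0) with hT
      obtain ⟨A, hA_sub, hA_card⟩ := Finset.exists_subset_card_eq (min_le_right k T.card)
      set y : EuclideanSpace ℝ (Fin n) := WithLp.toLp 2 (fun i => if i ∈ A then x i else 0) with hydef
      set z : EuclideanSpace ℝ (Fin n) := WithLp.toLp 2 (fun i => if i ∈ A then 0 else x i) with hzdef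
      have hxyz : x = y + z := by
        ext i
        by_cases h : i ∈ A <;> simp [hydef, hzdef, h]
      have hy_supp : (Finset.univ.filter (fun i => y i ≠ 0)) ⊆ A := by
        intro i hi
        simp only [Finset.mem_filter, Finset.mem_univ, true_and] at hi
        by_contra h
        exact hi (by simp [hydef, h])
      have hycard : (Finset.univ.filter (fun i => y i ≠ 0)).card ≤ k :=
        le_trans (Finset.card_le_card hy_supp) (by rw [hA_card]; exact min_le_left _ _)
      have hz_supp : (Finset.univ.filter (fun i => z i ≠ 0)) ⊆ T \ A := by
        intro i hi
        simp only [Finset.mem_filter, Finset.mem_univ, true_and] at hi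
        rw [Finset.mem_sdiff]
        by_cases h : i ∈ A
        · exact absurd (by simp [hzdef, h]) hi
        · refine ⟨?_, h⟩
          rw [hT]
          simp only [Finset.mem_filter, Finset.mem_univ, true_and]
          intro h0
          exact hi (by simp [hzdef, h, h0])
      have hzcard : (Finset.univ.filter (fun i => z i ≠ 0)).card ≤ m * k := by
        have h1 := Finset.card_le_card hz_supp
        rw [Finset.card_sdiff_of_subset hA_sub, hA_card] at h1
        rw [Nat.succ_mul] at hx
        omega
      have hnorm2 : ‖x‖ ^ 2 = ‖y‖ ^ 2 + ‖z‖ ^ 2 := by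
        rw [hsq x, hsq y, hsq z, ← Finset.sum_add_distrib]
        apply Finset.sum_congr rfl
        intro i _
        by_cases h : i ∈ A <;> simp [hydef, hzdef, h]
      have h1 : φ y ≤ ‖y‖ * OPT n φ k 1 := hkey y hycard
      have h2 : φ z ≤ Real.sqrt m * ‖z‖ * OPT n φ k 1 := ih z hzcard
      have hφx : φ x ≤ (‖y‖ + Real.sqrt m * ‖z‖) * OPT n φ k 1 := by
        calc φ x = φ (y + z) := by rw [← hxyz]
          _ ≤ φ y + φ z := hsub y z
          _ ≤ ‖y‖ * OPT n φ k 1 + Real.sqrt m * ‖z‖ * OPT n φ k 1 := add_le_add h1 h2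
          _ = (‖y‖ + Real.sqrt m * ‖z‖) * OPT n φ k 1 := by ring
      have hs : Real.sqrt m ^ 2 = (m : ℝ) := Real.sq_sqrt (Nat.cast_nonneg m)
      have hr : Real.sqrt ((m : ℝ) + 1) ^ 2 = (m : ℝ) + 1 := Real.sq_sqrt (by positivity)
      have hcs : ‖y‖ + Real.sqrt m * ‖z‖ ≤ Real.sqrt ((m : ℝ) + 1) * ‖x‖ := by
        have h0 : (0 : ℝ) ≤ Real.sqrt ((m : ℝ) + 1) * ‖x‖ := by positivity
        have h0' : (0 : ℝ) ≤ ‖y‖ + Real.sqrt m * ‖z‖ := by positivity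
        have key : (‖y‖ + Real.sqrt m * ‖z‖) ^ 2 ≤ (Real.sqrt ((m : ℝ) + 1) * ‖x‖) ^ 2 := by
          have expand : (Real.sqrt ((m : ℝ) + 1) * ‖x‖) ^ 2 = ((m : ℝ) + 1) * (‖y‖ ^ 2 + ‖z‖ ^ 2) := by
            rw [mul_pow, hr, hnorm2]
          rw [expand]
          nlinarith [sq_nonneg (Real.sqrt m * ‖y‖ - ‖z‖), hs, Real.sqrt_nonneg (m : ℝ),
            norm_nonneg y, norm_nonneg z]
        calc ‖y‖ + Real.sqrt m * ‖z‖ = Real.sqrt ((‖y‖ + Real.sqrt m * ‖z‖) ^ 2) :=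
              (Real.sqrt_sq h0').symm
          _ ≤ Real.sqrt ((Real.sqrt ((m : ℝ) + 1) * ‖x‖) ^ 2) := Real.sqrt_le_sqrt key
          _ = Real.sqrt ((m : ℝ) + 1) * ‖x‖ := Real.sqrt_sq h0
      have : φ x ≤ Real.sqrt ((m : ℝ) + 1) * ‖x‖ * OPT n φ k 1 := by
        calc φ x ≤ (‖y‖ + Real.sqrt m * ‖z‖) * OPT n φ k 1 := hφx
          _ ≤ (Real.sqrt ((m : ℝ) + 1) * ‖x‖) * OPT n φ k 1 :=
              mul_le_mul_of_nonneg_right hcs hOPTnonneg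
      convert this using 3
      push_cast
      ring
  -- assemble
  apply Real.sSup_le
  · rintro b ⟨x, ⟨hxw, hxt⟩, rfl⟩
    set m := ⌈(t : ℝ) / (k : ℝ)⌉₊ with hm
    have hcast : ((⌈(t : ℝ) / (k : ℝ)⌉ : ℤ) : ℝ) = (m : ℝ) :=
      (natCast_ceil_eq_intCast_ceil (by positivity)).symm
    have hk0 : (0 : ℝ) < (k : ℝ) := by exact_mod_cast hk
    have htk : t ≤ m * k := by
      have h1 : (t : ℝ) / (k : ℝ) ≤ (m : ℝ) := Nat.le_ceil _
      rw [div_le_iff₀ hk0] at h1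
      exact_mod_cast h1
    have hmx := main m x (le_trans hxt htk)
    rw [hcast]
    calc φ x ≤ Real.sqrt m * ‖x‖ * OPT n φ k 1 := hmx
      _ ≤ Real.sqrt m * w * OPT n φ k 1 := by
          apply mul_le_mul_of_nonneg_right _ hOPTnonneg
          exact mul_le_mul_of_nonneg_left hxw (Real.sqrt_nonneg _)
      _ = w * Real.sqrt m * OPT n φ k 1 := by ring
  · exact mul_nonneg (mul_nonneg hw (Real.sqrt_nonneg _)) hOPTnonneg
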